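/- arXiv:2010.09195 — 7 statements merged into one kernel-verified Lean document; each statement's English description precedes it below -/
import Mathlib

section
/- For every fixed angle θ ∈ (0, π/2), the function d ↦ f(d, θ) is strictly increasing on the interval (0, L·cos θ]. (This is the first monotonicity claim of Lemma 1: ∂f(d, θ)/∂d > 0 for d ≤ L·cos θ.) -/
/-- Distance from the UAV (at polar coordinates `(d, θ)` relative to Willie) to Bob. -/
noncomputable def db (L d θ : ℝ) : ℝ :=
  Real.sqrt (L ^ 2 + d ^ 2 - 2 * d * L * Real.cos θ)

/-- Elevation angle from Bob to the UAV (in radians). -/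
noncomputable def θb (L d θ : ℝ) : ℝ :=
  Real.arcsin (d * Real.sin θ / db L d θ)

/-- Probability of a LoS component in the UAV-to-Bob channel. -/
noncomputable def pb (a b L d θ : ℝ) : ℝ :=
  1 / (1 + a * Real.exp (-b * ((180 / Real.pi) * θb L d θ - a)))

/-- The objective `f(d, θ) = d_b^{ξ_L} · p_b`. -/
noncomputable def f (a b L ξL d θ : ℝ) : ℝ :=
  db L d θ ^ ξL * pb a b L d θ

/-- For fixed `θ ∈ (0, π/2)`, `d ↦ f(d, θ)` is strictly increasing on `(0, L·cos θ]`. -/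
theorem stmt_0 (a b L ξL θ : ℝ) (ha : 0 < a) (hb : 0 < b) (hL : 0 < L)
    (hξ : ξL < 0) (hθ : θ ∈ Set.Ioo 0 (Real.pi / 2)) :
    StrictMonoOn (fun d => f a b L ξL d θ) (Set.Ioc 0 (L * Real.cos θ)) := by
  obtain ⟨hθ0, hθ2⟩ := hθ
  have hsin : 0 < Real.sin θ :=
    Real.sin_pos_of_pos_of_lt_pi hθ0 (lt_trans hθ2 (by linarith [Real.pi_pos]))
  have hcos : 0 < Real.cos θ :=
    Real.cos_pos_of_mem_Ioo ⟨by linarith [Real.pi_pos], hθ2⟩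
  have hpyth := Real.sin_sq_add_cos_sq θ
  -- key facts about db for d in the interval
  have key : ∀ d : ℝ, 0 < d → (d * Real.sin θ) ^ 2 ≤
      L ^ 2 + d ^ 2 - 2 * d * L * Real.cos θ := by
    intro d hd
    nlinarith [sq_nonneg (L - d * Real.cos θ)]
  have hdbpos : ∀ d : ℝ, 0 < d → 0 < db L d θ := by
    intro d hd
    have h1 : (0:ℝ) < (d * Real.sin θ) ^ 2 := by positivity
    exact Real.sqrt_pos.2 (lt_of_lt_of_le h1 (key d hd))
  have hdble : ∀ d : ℝ, 0 < d → d * Real.sin θ ≤ db L d θ := by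
    intro d hd
    have := Real.sqrt_le_sqrt (key d hd)
    rwa [Real.sqrt_sq (by positivity)] at this
  intro x hx y hy hxy
  obtain ⟨hx0, hxle⟩ := hx
  obtain ⟨hy0, hyle⟩ := hy
  have hDx := hdbpos x hx0
  have hDy := hdbpos y hy0
  -- db is strictly decreasing
  have hdb : db L y θ < db L x θ := by
    apply Real.sqrt_lt_sqrt (by nlinarith [key y hy0, sq_nonneg (y * Real.sin θ)])
    nlinarith
  -- the ratio d sinθ / db is strictly increasing
  have hratio : x * Real.sin θ / db L x θ < y * Real.sin θ / db L y θ := by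
    calc x * Real.sin θ / db L x θ < y * Real.sin θ / db L x θ := by
          apply div_lt_div_of_pos_right (by nlinarith) hDx
      _ < y * Real.sin θ / db L y θ :=
          div_lt_div_of_pos_left (by positivity) hDy hdb
  have hmem : ∀ d : ℝ, 0 < d → d * Real.sin θ / db L d θ ∈ Set.Icc (-1:ℝ) 1 := by
    intro d hd
    constructor
    · have : (0:ℝ) ≤ d * Real.sin θ / db L d θ :=
        div_nonneg (by positivity) (hdbpos d hd).le
      linarith
    · rw [div_le_one (hdbpos d hd)]
      exact hdble d hd
  have hθb : θb L x θ < θb L y θ :=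
    Real.strictMonoOn_arcsin (hmem x hx0) (hmem y hy0) hratio
  -- pb is strictly increasing
  have hpb : pb a b L x θ < pb a b L y θ := by
    unfold pb
    have hc : (0:ℝ) < 180 / Real.pi := by positivity
    have hexp : Real.exp (-b * ((180 / Real.pi) * θb L y θ - a)) <
        Real.exp (-b * ((180 / Real.pi) * θb L x θ - a)) := by
      apply Real.exp_lt_exp.2
      nlinarith [mul_pos hb (mul_pos hc (sub_pos.2 hθb))]
    have h1 : (0:ℝ) < 1 + a * Real.exp (-b * ((180 / Real.pi) * θb L y θ - a)) := by
      positivity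
    apply one_div_lt_one_div_of_lt h1
    nlinarith
  have hrpow : db L x θ ^ ξL < db L y θ ^ ξL :=
    Real.rpow_lt_rpow_of_neg hDy hdb hξ
  have hpbx : 0 < pb a b L x θ := by unfold pb; positivity
  have hrx : 0 < db L x θ ^ ξL := Real.rpow_pos_of_pos hDx _
  unfold f
  exact mul_lt_mul'' hrpow hpb hrx.le hpbx.le
end

section
/- For every fixed angle θ ∈ (0, π/2), the function d ↦ f(d, θ) is strictly decreasing on the interval [L/cos θ, ∞). (This is the second monotonicity claim of Lemma 1: ∂f(d, θ)/∂d < 0 for d ≥ L/cos θ.) -/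
/-- For fixed `θ ∈ (0, π/2)`, `d ↦ f(d, θ)` is strictly decreasing on `[L/cos θ, ∞)`. -/
theorem stmt_1 (a b L ξL θ : ℝ) (ha : 0 < a) (hb : 0 < b) (hL : 0 < L)
    (hξ : ξL < 0) (hθ : θ ∈ Set.Ioo 0 (Real.pi / 2)) :
    StrictAntiOn (fun d => f a b L ξL d θ) (Set.Ici (L / Real.cos θ)) := by
  obtain ⟨hθ0, hθ2⟩ := hθ
  have hc : 0 < Real.cos θ := Real.cos_pos_of_mem_Ioo ⟨by linarith [Real.pi_pos], hθ2⟩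
  have hs : 0 < Real.sin θ := Real.sin_pos_of_pos_of_lt_pi hθ0 (by linarith [Real.pi_pos])
  have hpyth := Real.sin_sq_add_cos_sq θ
  -- inner quadratic positivity
  have hinner : ∀ d : ℝ, 0 < L ^ 2 + d ^ 2 - 2 * d * L * Real.cos θ := by
    intro d
    nlinarith [sq_nonneg (d - L * Real.cos θ), sq_nonneg (L * Real.sin θ), mul_pos hL hs]
  have hdbpos : ∀ d : ℝ, 0 < db L d θ := fun d => Real.sqrt_pos.mpr (hinner d)
  have hdbsq : ∀ d : ℝ, (db L d θ) ^ 2 = L ^ 2 + d ^ 2 - 2 * d * L * Real.cos θ := by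
    intro d; exact Real.sq_sqrt (hinner d).le
  intro x hx y hy hxy
  simp only [Set.mem_Ici] at hx hy
  have hxc : L ≤ x * Real.cos θ := by
    rw [div_le_iff₀ hc] at hx; linarith
  have hyc : L ≤ y * Real.cos θ := by
    rw [div_le_iff₀ hc] at hy; linarith
  have hx0 : 0 < x := lt_of_lt_of_le (div_pos hL hc) hx
  have hy0 : 0 < y := hx0.trans hxy
  -- db is strictly increasing
  have hc1 : Real.cos θ < 1 := by nlinarith
  have hxLc : L * Real.cos θ < x := by nlinarith
  have hyLc : L * Real.cos θ < y := by nlinarith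
  have hdb : db L x θ < db L y θ := by
    apply Real.sqrt_lt_sqrt (hinner x).le
    nlinarith [mul_pos (sub_pos.mpr hxy) (by linarith : (0:ℝ) < x + y - 2 * (L * Real.cos θ))]
  -- rpow part
  have hrpow : db L y θ ^ ξL < db L x θ ^ ξL :=
    Real.rpow_lt_rpow_of_neg (hdbpos x) hdb hξ
  have hrpowpos : 0 < db L y θ ^ ξL := Real.rpow_pos_of_pos (hdbpos y) ξL
  -- θb is antitone: y * sin θ / db y ≤ x * sin θ / db x
  have hθb : θb L y θ ≤ θb L x θ := by
    apply Real.monotone_arcsin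
    rw [div_le_div_iff₀ (hdbpos y) (hdbpos x)]
    have h2 : (y * Real.sin θ * db L x θ) ^ 2 ≤ (x * Real.sin θ * db L y θ) ^ 2 := by
      have ex := hdbsq x
      have ey := hdbsq y
      have key : y ^ 2 * (L ^ 2 + x ^ 2 - 2 * x * L * Real.cos θ)
          ≤ x ^ 2 * (L ^ 2 + y ^ 2 - 2 * y * L * Real.cos θ) := by
        have h2xy : L * (x + y) ≤ 2 * x * y * Real.cos θ := by
          nlinarith [mul_nonneg (sub_nonneg.mpr hxc) hy0.le,
            mul_nonneg (sub_nonneg.mpr hyc) hx0.le]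
        nlinarith [mul_nonneg (mul_nonneg hL.le (sub_pos.mpr hxy).le)
          (sub_nonneg.mpr h2xy)]
      calc (y * Real.sin θ * db L x θ) ^ 2
          = Real.sin θ ^ 2 * (y ^ 2 * (L ^ 2 + x ^ 2 - 2 * x * L * Real.cos θ)) := by
            rw [mul_pow, mul_pow, ex]; ring
        _ ≤ Real.sin θ ^ 2 * (x ^ 2 * (L ^ 2 + y ^ 2 - 2 * y * L * Real.cos θ)) := by
            apply mul_le_mul_of_nonneg_left key (sq_nonneg _)
        _ = (x * Real.sin θ * db L y θ) ^ 2 := by rw [mul_pow, mul_pow, ey]; ring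
    have h1 : 0 ≤ x * Real.sin θ * db L y θ :=
      mul_nonneg (mul_nonneg hx0.le hs.le) (hdbpos y).le
    have h1' : 0 ≤ y * Real.sin θ * db L x θ :=
      mul_nonneg (mul_nonneg hy0.le hs.le) (hdbpos x).le
    exact (pow_le_pow_iff_left₀ h1' h1 two_ne_zero).mp h2
  -- pb part
  have hden : ∀ d : ℝ, 0 < 1 + a * Real.exp (-b * ((180 / Real.pi) * θb L d θ - a)) := by
    intro d; positivity
  have hk : 0 < (180:ℝ) / Real.pi := by positivity
  have hexp : Real.exp (-b * ((180 / Real.pi) * θb L x θ - a))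
      ≤ Real.exp (-b * ((180 / Real.pi) * θb L y θ - a)) := by
    apply Real.exp_le_exp.mpr
    have h := mul_le_mul_of_nonneg_left hθb (mul_nonneg hb.le hk.le)
    ring_nf at h ⊢
    linarith
  have hpb : pb a b L y θ ≤ pb a b L x θ := by
    unfold pb
    apply one_div_le_one_div_of_le (hden x)
    have := mul_le_mul_of_nonneg_left hexp ha.le
    linarith
  have hpbx : 0 < pb a b L x θ := by unfold pb; positivity
  have hpby : 0 < pb a b L y θ := by unfold pb; positivity
  show f a b L ξL y θ < f a b L ξL x θ
  unfold f
  calc db L y θ ^ ξL * pb a b L y θ ≤ db L y θ ^ ξL * pb a b L x θ :=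
        mul_le_mul_of_nonneg_left hpb hrpowpos.le
    _ < db L x θ ^ ξL * pb a b L x θ := mul_lt_mul_of_pos_right hrpow hpbx
end

section
/- For every fixed angle θ ∈ (0, π/2), the auxiliary function f̄(d) = ξ_L·(d − L·cos θ) + (180·b·L·sin θ/π)·(1 − p_b(d, θ)) is strictly decreasing in d on the closed interval [L·cos θ, L/cos θ]. -/
lemma db_pos (L d θ : ℝ) (hL : 0 < L) (hs : Real.sin θ ≠ 0) : 0 < db L d θ := by
  have h2 : 0 < Real.sin θ ^ 2 := pow_pos (abs_pos.2 hs) 2 |>.trans_eq (sq_abs _)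
  have hc := Real.sin_sq_add_cos_sq θ
  rw [db]
  apply Real.sqrt_pos.2
  nlinarith [sq_nonneg (d - L * Real.cos θ), mul_pos (mul_pos hL hL) h2]

lemma db_sq (L d θ : ℝ) (hL : 0 < L) (hs : Real.sin θ ≠ 0) :
    db L d θ ^ 2 = L ^ 2 + d ^ 2 - 2 * d * L * Real.cos θ := by
  have h2 : 0 < Real.sin θ ^ 2 := pow_pos (abs_pos.2 hs) 2 |>.trans_eq (sq_abs _)
  have hc := Real.sin_sq_add_cos_sq θ
  rw [db, Real.sq_sqrt]
  nlinarith [sq_nonneg (d - L * Real.cos θ), mul_pos (mul_pos hL hL) h2]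

/-- For fixed `θ ∈ (0, π/2)`, the auxiliary function
`f̄(d) = ξ_L·(d − L·cos θ) + (180·b·L·sin θ/π)·(1 − p_b(d, θ))`
is strictly decreasing on `[L·cos θ, L/cos θ]`. -/
theorem stmt_2 (a b L ξL θ : ℝ) (ha : 0 < a) (hb : 0 < b) (hL : 0 < L)
    (hξ : ξL < 0) (hθ : θ ∈ Set.Ioo 0 (Real.pi / 2)) :
    StrictAntiOn
      (fun d => ξL * (d - L * Real.cos θ) +
        (180 * b * L * Real.sin θ / Real.pi) * (1 - pb a b L d θ))
      (Set.Icc (L * Real.cos θ) (L / Real.cos θ)) := by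
  obtain ⟨hθ0, hθ2⟩ := hθ
  have hs : 0 < Real.sin θ := Real.sin_pos_of_pos_of_lt_pi hθ0 (hθ2.trans (by linarith [Real.pi_pos]))
  have hcθ : 0 < Real.cos θ := Real.cos_pos_of_mem_Ioo ⟨by linarith [Real.pi_pos], hθ2⟩
  have hc1 : Real.cos θ ≤ 1 := Real.cos_le_one θ
  -- monotonicity of pb on the interval
  have key : ∀ x ∈ Set.Icc (L * Real.cos θ) (L / Real.cos θ),
      ∀ y ∈ Set.Icc (L * Real.cos θ) (L / Real.cos θ), x ≤ y →
      pb a b L x θ ≤ pb a b L y θ := by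
    intro x hx y hy hxy
    have hx0 : 0 < x := lt_of_lt_of_le (by positivity) hx.1
    have hy0 : 0 < y := lt_of_lt_of_le hx0 hxy
    have hyL : y * Real.cos θ ≤ L := by
      have := hy.2
      calc y * Real.cos θ ≤ (L / Real.cos θ) * Real.cos θ := by
            exact mul_le_mul_of_nonneg_right this hcθ.le
        _ = L := by field_simp
    have hdx : 0 < db L x θ := db_pos L x θ hL hs.ne'
    have hdy : 0 < db L y θ := db_pos L y θ hL hs.ne'
    have hsqx := db_sq L x θ hL hs.ne'
    have hsqy := db_sq L y θ hL hs.ne'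
    -- ratio monotone
    have hrat : x * Real.sin θ / db L x θ ≤ y * Real.sin θ / db L y θ := by
      rw [div_le_div_iff₀ hdx hdy]
      have hsq : (x * Real.sin θ * db L y θ) ^ 2 ≤ (y * Real.sin θ * db L x θ) ^ 2 := by
        have h1 : x * y * Real.cos θ ≤ x * L := by nlinarith
        have h2 : x * y * Real.cos θ ≤ y * L := by nlinarith
        have key2 : x ^ 2 * (db L y θ ^ 2) ≤ y ^ 2 * (db L x θ ^ 2) := by
          rw [hsqx, hsqy]
          nlinarith [mul_nonneg (mul_nonneg (sub_nonneg.2 hxy) hL.le)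
            (by linarith : (0:ℝ) ≤ (x + y) * L - 2 * (x * y * Real.cos θ))]
        calc (x * Real.sin θ * db L y θ) ^ 2
            = Real.sin θ ^ 2 * (x ^ 2 * db L y θ ^ 2) := by ring
          _ ≤ Real.sin θ ^ 2 * (y ^ 2 * db L x θ ^ 2) := by
              exact mul_le_mul_of_nonneg_left key2 (sq_nonneg _)
          _ = (y * Real.sin θ * db L x θ) ^ 2 := by ring
      have h1 : 0 ≤ x * Real.sin θ * db L y θ := by positivity
      have h2 : 0 ≤ y * Real.sin θ * db L x θ := by positivity
      nlinarith
    have hθb : θb L x θ ≤ θb L y θ := Real.monotone_arcsin hrat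
    rw [pb, pb]
    have hpos : ∀ d : ℝ, 0 < 1 + a * Real.exp (-b * ((180 / Real.pi) * θb L d θ - a)) := by
      intro d; positivity
    apply one_div_le_one_div_of_le (hpos y)
    have : -b * ((180 / Real.pi) * θb L y θ - a) ≤ -b * ((180 / Real.pi) * θb L x θ - a) := by
      have hpi : 0 < 180 / Real.pi := by positivity
      nlinarith [mul_le_mul_of_nonneg_left hθb (by positivity : (0:ℝ) ≤ b * (180 / Real.pi))]
    have := Real.exp_le_exp.2 this
    nlinarith
  intro x hx y hy hxy
  have hC : 0 < 180 * b * L * Real.sin θ / Real.pi := by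
    have := Real.pi_pos; positivity
  have hpb := key x hx y hy hxy.le
  simp only
  nlinarith [mul_le_mul_of_nonneg_left hpb hC.le]
end

section
/- For every fixed angle θ ∈ (0, π/2), the function d ↦ p_b(d, θ) is strictly increasing on the interval (0, L/cos θ). (In the paper's Appendix A this follows from the derivative formula (30), whose sign equals the sign of L − d·cos θ.) -/
/-- For fixed `θ ∈ (0, π/2)`, `d ↦ p_b(d, θ)` is strictly increasing on `(0, L/cos θ)`. -/
theorem stmt_4 (a b L ξL θ : ℝ) (ha : 0 < a) (hb : 0 < b) (hL : 0 < L)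
    (hξ : ξL < 0) (hθ : θ ∈ Set.Ioo 0 (Real.pi / 2)) :
    StrictMonoOn (fun d => pb a b L d θ) (Set.Ioo 0 (L / Real.cos θ)) := by
  obtain ⟨hθ0, hθ2⟩ := hθ
  have hs : 0 < Real.sin θ := Real.sin_pos_of_pos_of_lt_pi hθ0 (by linarith [Real.pi_pos])
  have hc : 0 < Real.cos θ := Real.cos_pos_of_mem_Ioo ⟨by linarith [Real.pi_pos], hθ2⟩
  have hsc : Real.sin θ ^ 2 + Real.cos θ ^ 2 = 1 := Real.sin_sq_add_cos_sq θ
  -- positivity of the quantity under the square root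
  have hq : ∀ d : ℝ, 0 < d → 0 < L ^ 2 + d ^ 2 - 2 * d * L * Real.cos θ := by
    intro d hd
    nlinarith [sq_nonneg (L - d * Real.cos θ), mul_pos hd hs, sq_nonneg (d * Real.sin θ)]
  have hdb : ∀ d : ℝ, 0 < d → 0 < db L d θ := fun d hd => Real.sqrt_pos.mpr (hq d hd)
  -- ratio bounds
  have hr1 : ∀ d : ℝ, 0 < d → d * Real.sin θ / db L d θ ≤ 1 := by
    intro d hd
    rw [div_le_one (hdb d hd)]
    have : (d * Real.sin θ) ^ 2 ≤ L ^ 2 + d ^ 2 - 2 * d * L * Real.cos θ := by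
      nlinarith [sq_nonneg (L - d * Real.cos θ)]
    calc d * Real.sin θ = Real.sqrt ((d * Real.sin θ) ^ 2) :=
        (Real.sqrt_sq (by positivity)).symm
      _ ≤ db L d θ := Real.sqrt_le_sqrt this
  have hr0 : ∀ d : ℝ, 0 < d → 0 ≤ d * Real.sin θ / db L d θ := by
    intro d hd
    exact div_nonneg (by positivity) (hdb d hd).le
  intro d1 hd1 d2 hd2 h12
  obtain ⟨hd1p, hd1L⟩ := hd1
  obtain ⟨hd2p, hd2L⟩ := hd2
  have hd1c : d1 * Real.cos θ < L := by
    rwa [lt_div_iff₀ hc] at hd1L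
  have hd2c : d2 * Real.cos θ < L := by
    rwa [lt_div_iff₀ hc] at hd2L
  -- the ratio is strictly increasing
  have hrmono : d1 * Real.sin θ / db L d1 θ < d2 * Real.sin θ / db L d2 θ := by
    rw [div_lt_div_iff₀ (hdb d1 hd1p) (hdb d2 hd2p)]
    have hsq : (d1 * Real.sin θ * db L d2 θ) ^ 2 < (d2 * Real.sin θ * db L d1 θ) ^ 2 := by
      have e1 : db L d1 θ ^ 2 = L ^ 2 + d1 ^ 2 - 2 * d1 * L * Real.cos θ :=
        Real.sq_sqrt (hq d1 hd1p).le
      have e2 : db L d2 θ ^ 2 = L ^ 2 + d2 ^ 2 - 2 * d2 * L * Real.cos θ :=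
        Real.sq_sqrt (hq d2 hd2p).le
      have key : d1 ^ 2 * (L ^ 2 + d2 ^ 2 - 2 * d2 * L * Real.cos θ)
          < d2 ^ 2 * (L ^ 2 + d1 ^ 2 - 2 * d1 * L * Real.cos θ) := by
        nlinarith [mul_pos (sub_pos.mpr h12) hL, mul_pos hd1p hd2p,
          mul_lt_mul_of_pos_left hd1c hd2p, mul_lt_mul_of_pos_left hd2c hd1p]
      calc (d1 * Real.sin θ * db L d2 θ) ^ 2
          = Real.sin θ ^ 2 * (d1 ^ 2 * (L ^ 2 + d2 ^ 2 - 2 * d2 * L * Real.cos θ)) := by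
            rw [mul_pow, mul_pow, e2]; ring
        _ < Real.sin θ ^ 2 * (d2 ^ 2 * (L ^ 2 + d1 ^ 2 - 2 * d1 * L * Real.cos θ)) := by
            exact mul_lt_mul_of_pos_left key (by positivity)
        _ = (d2 * Real.sin θ * db L d1 θ) ^ 2 := by
            rw [mul_pow, mul_pow, e1]; ring
    exact lt_of_pow_lt_pow_left₀ 2 (mul_nonneg (by positivity) (hdb d1 hd1p).le) hsq
  -- θb strictly increases
  have hθb : θb L d1 θ < θb L d2 θ := by
    exact Real.strictMonoOn_arcsin ⟨by linarith [hr0 d1 hd1p], hr1 d1 hd1p⟩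
      ⟨by linarith [hr0 d2 hd2p], hr1 d2 hd2p⟩ hrmono
  -- conclude for pb
  have hk : (0:ℝ) < 180 / Real.pi := by positivity
  have hexp : Real.exp (-b * ((180 / Real.pi) * θb L d2 θ - a))
      < Real.exp (-b * ((180 / Real.pi) * θb L d1 θ - a)) := by
    apply Real.exp_lt_exp.mpr
    have := mul_lt_mul_of_pos_left hθb hk
    nlinarith
  have hpos : ∀ d : ℝ, 0 < 1 + a * Real.exp (-b * ((180 / Real.pi) * θb L d θ - a)) := by
    intro d; positivity
  simp only [pb]
  apply one_div_lt_one_div_of_lt (hpos d2)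
  have := mul_lt_mul_of_pos_left hexp ha
  linarith
end

section
/- For every fixed d with 0 < d < L, the function θ ↦ f(d, θ) is strictly decreasing on the interval [arccos(d/L), π/2]. (This is the last claim of Lemma 2: ∂f(d, θ)/∂θ < 0 for θ ≥ arccos(d/L).) -/
lemma key_poly (d L c1 c2 : ℝ) (hd : 0 < d) (hdL : d < L) (hc2 : 0 ≤ c2)
    (hcc : c2 < c1) (hc1 : L * c1 ≤ d) :
    d ^ 2 * (1 - c2 ^ 2) * (L ^ 2 + d ^ 2 - 2 * d * L * c1) <
      d ^ 2 * (1 - c1 ^ 2) * (L ^ 2 + d ^ 2 - 2 * d * L * c2) := by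
  have hc1L : d * c1 < L := by nlinarith
  have hc2L : d * c2 < L := by nlinarith
  have hLc2 : L * c2 < d := by nlinarith
  have hd2 : (0:ℝ) < d ^ 2 := by positivity
  nlinarith [mul_pos hd2 (mul_pos (mul_pos (sub_pos.2 hcc) (sub_pos.2 hLc2)) (sub_pos.2 hc1L)),
    mul_nonneg (mul_nonneg (mul_nonneg hd2.le (sub_pos.2 hcc).le) (sub_nonneg.2 hc1))
      (sub_pos.2 hc2L).le]

/-- For fixed `0 < d < L`, `θ ↦ f(d, θ)` is strictly decreasing on `[arccos(d/L), π/2]`. -/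
theorem stmt_9 (a b L ξL d : ℝ) (ha : 0 < a) (hb : 0 < b) (hL : 0 < L)
    (hξ : ξL < 0) (hd : 0 < d) (hdL : d < L) :
    StrictAntiOn (fun θ => f a b L ξL d θ) (Set.Icc (Real.arccos (d / L)) (Real.pi / 2)) := by
  have hπ := Real.pi_pos
  have hdL1 : d / L ≤ 1 := by rw [div_le_one hL]; linarith
  have hdLm1 : (-1:ℝ) ≤ d / L := by
    have : (0:ℝ) ≤ d / L := by positivity
    linarith
  have harc0 : 0 < Real.arccos (d / L) :=
    Real.arccos_pos.mpr (by rw [div_lt_one hL]; exact hdL)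
  intro θ1 hθ1 θ2 hθ2 hlt
  obtain ⟨h1l, h1r⟩ := hθ1
  obtain ⟨h2l, h2r⟩ := hθ2
  -- trig facts
  have hs1 : 0 < Real.sin θ1 :=
    Real.sin_pos_of_pos_of_lt_pi (lt_of_lt_of_le harc0 h1l) (by linarith)
  have hs2 : 0 < Real.sin θ2 :=
    Real.sin_pos_of_pos_of_lt_pi (lt_of_lt_of_le harc0 h2l) (by linarith)
  have hc1 : Real.cos θ1 ≤ d / L := by
    have := Real.cos_le_cos_of_nonneg_of_le_pi (Real.arccos_nonneg _) (by linarith) h1l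
    rwa [Real.cos_arccos hdLm1 hdL1] at this
  have hc2 : 0 ≤ Real.cos θ2 := Real.cos_nonneg_of_mem_Icc ⟨by linarith [harc0, h2l], h2r⟩
  have hcc : Real.cos θ2 < Real.cos θ1 :=
    Real.strictAntiOn_cos ⟨by linarith [harc0], by linarith⟩ ⟨by linarith [harc0], by linarith⟩ hlt
  have hc1' : L * Real.cos θ1 ≤ d := by
    rw [mul_comm, ← le_div_iff₀ hL]; exact hc1
  have hc1le1 : Real.cos θ1 ≤ 1 := Real.cos_le_one _
  -- db facts
  have hargpos : ∀ θ : ℝ, 0 < L ^ 2 + d ^ 2 - 2 * d * L * Real.cos θ := by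
    intro θ
    nlinarith [Real.cos_le_one θ, sq_nonneg (L - d),
      mul_nonneg (mul_nonneg hd.le hL.le) (sub_nonneg.2 (Real.cos_le_one θ))]
  have hdbpos : ∀ θ : ℝ, 0 < db L d θ := fun θ => Real.sqrt_pos.2 (hargpos θ)
  have hdbsq : ∀ θ : ℝ, db L d θ ^ 2 = L ^ 2 + d ^ 2 - 2 * d * L * Real.cos θ := fun θ =>
    Real.sq_sqrt (hargpos θ).le
  have hdblt : db L d θ1 < db L d θ2 := by
    apply Real.sqrt_lt_sqrt (hargpos θ1).le
    nlinarith [mul_pos hd hL]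
  -- the ratio g = d sin θ / db is in [-1,1] and strictly decreasing
  have hg1 : ∀ θ : ℝ, d * Real.sin θ / db L d θ ≤ 1 := by
    intro θ
    rw [div_le_one (hdbpos θ)]
    have h1 : (d * Real.sin θ) ^ 2 ≤ db L d θ ^ 2 := by
      rw [hdbsq]
      nlinarith [Real.sin_sq_add_cos_sq θ, sq_nonneg (L - d * Real.cos θ)]
    nlinarith [hdbpos θ]
  have hgm1 : ∀ θ : ℝ, 0 < Real.sin θ → (-1 : ℝ) ≤ d * Real.sin θ / db L d θ := by
    intro θ hs
    have : 0 ≤ d * Real.sin θ / db L d θ :=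
      div_nonneg (mul_nonneg hd.le hs.le) (hdbpos θ).le
    linarith
  have hglt : d * Real.sin θ2 / db L d θ2 < d * Real.sin θ1 / db L d θ1 := by
    rw [div_lt_div_iff₀ (hdbpos θ2) (hdbpos θ1)]
    have hsq : (d * Real.sin θ2 * db L d θ1) ^ 2 < (d * Real.sin θ1 * db L d θ2) ^ 2 := by
      rw [mul_pow, mul_pow, mul_pow, mul_pow, hdbsq, hdbsq, Real.sin_sq, Real.sin_sq]
      exact key_poly d L (Real.cos θ1) (Real.cos θ2) hd hdL hc2 hcc hc1'
    have hpos1 : 0 ≤ d * Real.sin θ1 * db L d θ2 :=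
      mul_nonneg (mul_nonneg hd.le hs1.le) (hdbpos θ2).le
    exact lt_of_pow_lt_pow_left₀ 2 hpos1 hsq
  -- θb strictly decreasing
  have hθb : θb L d θ2 < θb L d θ1 := by
    unfold θb
    exact Real.strictMonoOn_arcsin ⟨hgm1 θ2 hs2, hg1 θ2⟩ ⟨hgm1 θ1 hs1, hg1 θ1⟩ hglt
  -- pb strictly decreasing
  have hexp : Real.exp (-b * ((180 / Real.pi) * θb L d θ1 - a)) <
      Real.exp (-b * ((180 / Real.pi) * θb L d θ2 - a)) := by
    apply Real.exp_lt_exp.2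
    have h180 : (0:ℝ) < 180 / Real.pi := by positivity
    have h1 := mul_lt_mul_of_pos_left (mul_lt_mul_of_pos_left hθb h180) hb
    linarith [h1]
  have hden1 : 0 < 1 + a * Real.exp (-b * ((180 / Real.pi) * θb L d θ1 - a)) := by positivity
  have hpb : pb a b L d θ2 < pb a b L d θ1 := by
    unfold pb
    apply one_div_lt_one_div_of_lt hden1
    linarith [mul_lt_mul_of_pos_left hexp ha]
  have hpbpos : 0 < pb a b L d θ2 := by
    unfold pb; positivity
  -- rpow strictly decreasing
  have hr : db L d θ2 ^ ξL < db L d θ1 ^ ξL :=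
    Real.rpow_lt_rpow_of_neg (hdbpos θ1) hdblt hξ
  have hrpos : 0 ≤ db L d θ1 ^ ξL := (Real.rpow_pos_of_pos (hdbpos θ1) ξL).le
  -- combine
  simp only [f]
  exact mul_lt_mul hr hpb.le hpbpos hrpos
end

section
/- (Lemma 3) For every fixed d with d > L, the function θ ↦ f(d, θ) is strictly decreasing on the interval [arccos(L/d), π/2], and it has a unique global maximizer θ° over θ ∈ [0, π/2], which lies in the closed interval [0, arccos(L/d)]; moreover G(arccos(L/d)) = 0, where G(θ) = (L² + d²)·cos θ − d·L·(1 + cos² θ). -/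
/-- The function `G(θ) = (L² + d²)·cos θ − d·L·(1 + cos² θ)`. -/
noncomputable def Gfun (L d θ : ℝ) : ℝ :=
  (L ^ 2 + d ^ 2) * Real.cos θ - d * L * (1 + Real.cos θ ^ 2)

namespace Stmt11Aux

open Real Set

/-- squared distance -/
noncomputable def uu (L d θ : ℝ) : ℝ := L ^ 2 + d ^ 2 - 2 * d * L * Real.cos θ

noncomputable def EE (a b L d θ : ℝ) : ℝ :=
  Real.exp (-b * ((180 / Real.pi) * θb L d θ - a))

noncomputable def Afun (a b L d θ : ℝ) : ℝ :=
  b * (180 / Real.pi) * (a * EE a b L d θ / (1 + a * EE a b L d θ))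

noncomputable def Bfun (L ξL d θ : ℝ) : ℝ :=
  (-ξL) * L * Real.sin θ / (d - L * Real.cos θ)

noncomputable def Dfun (a b L ξL d θ : ℝ) : ℝ :=
  Afun a b L d θ - Bfun L ξL d θ

section Basic

variable {a b L ξL d : ℝ}

lemma uu_pos (hL : 0 < L) (hd : L < d) (θ : ℝ) : 0 < uu L d θ := by
  have h1 := Real.cos_le_one θ
  have h2 : 0 < d * L := mul_pos (hL.trans hd) hL
  rw [uu]; nlinarith [sq_nonneg (d - L)]

lemma db_eq (L d θ : ℝ) : db L d θ = Real.sqrt (uu L d θ) := rfl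

lemma db_pos (hL : 0 < L) (hd : L < d) (θ : ℝ) : 0 < db L d θ := Real.sqrt_pos.2 (uu_pos hL hd θ)

lemma db_sq (hL : 0 < L) (hd : L < d) (θ : ℝ) : db L d θ ^ 2 = uu L d θ := Real.sq_sqrt (uu_pos hL hd θ).le

lemma EE_pos (a b L d θ : ℝ) : 0 < EE a b L d θ := Real.exp_pos _

lemma den_pos (ha : 0 < a) (θ : ℝ) : 0 < 1 + a * EE a b L d θ := by
  have := EE_pos a b L d θ; positivity

lemma pb_eq (a b L d θ : ℝ) : pb a b L d θ = (1 + a * EE a b L d θ)⁻¹ := by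
  rw [pb, one_div]; rfl

lemma pb_pos (ha : 0 < a) (θ : ℝ) : 0 < pb a b L d θ := by
  rw [pb_eq]; exact inv_pos.2 (den_pos ha θ)

lemma f_pos (ha : 0 < a) (hL : 0 < L) (hd : L < d) (θ : ℝ) : 0 < f a b L ξL d θ :=
  mul_pos (Real.rpow_pos_of_pos (db_pos hL hd θ) _) (pb_pos ha θ)

lemma dLc_pos (hL : 0 < L) (hd : L < d) (θ : ℝ) : 0 < d - L * Real.cos θ := by
  have h1 := Real.cos_le_one θ
  nlinarith

lemma k_pos : (0:ℝ) < 180 / Real.pi := by positivity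

end Basic

section Mono

variable {a b L ξL d : ℝ}

lemma claimA {c1 c2 : ℝ} (hL : 0 < L) (hd : L < d) (h2 : 0 ≤ c2) (hlt : c2 < c1)
    (h1 : d * c1 ≤ L) :
    (1 - c2^2) * (L^2 + d^2 - 2*d*L*c1) < (1 - c1^2) * (L^2 + d^2 - 2*d*L*c2) := by
  have hc2 : d * c2 < L := lt_of_lt_of_le (by nlinarith) h1
  nlinarith [mul_pos (sub_pos.2 hlt) (mul_pos (by nlinarith : (0:ℝ) < d^2 - L^2)
      (by linarith : (0:ℝ) < L - d*c2)),
    mul_nonneg (mul_nonneg (sub_pos.2 hlt).le (by linarith : (0:ℝ) ≤ L - d*c1))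
      (by nlinarith [sq_nonneg (d-L)] : (0:ℝ) ≤ L^2 + d^2 - 2*d*L*c2)]

lemma claimB {c1 c2 : ℝ} (hL : 0 < L) (hd : L < d) (h2 : L ≤ d * c2) (hlt : c2 < c1)
    (h1 : c1 ≤ 1) :
    (1 - c1^2) * (L^2 + d^2 - 2*d*L*c2) < (1 - c2^2) * (L^2 + d^2 - 2*d*L*c1) := by
  have hc2 : c2 ≤ 1 := by nlinarith
  have hc2' : 0 < c2 := by nlinarith
  have hdc2 : 0 < d - L*c2 := by nlinarith
  have hu2 : (0:ℝ) < L^2 + d^2 - 2*d*L*c2 := by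
    nlinarith [mul_pos hdc2 hdc2,
      mul_nonneg (mul_nonneg (sq_nonneg L) (by linarith : (0:ℝ) ≤ 1-c2))
        (by linarith : (0:ℝ) ≤ 1+c2)]
  nlinarith [mul_nonneg (mul_nonneg (sub_pos.2 hlt).le hdc2.le) (by linarith : (0:ℝ) ≤ d*c2 - L),
    mul_pos (mul_pos (sub_pos.2 hlt) (sub_pos.2 hlt)) hu2]

lemma sin_sq' (θ : ℝ) : Real.sin θ ^ 2 = 1 - Real.cos θ ^ 2 := by
  nlinarith [Real.sin_sq_add_cos_sq θ]

lemma cosT (hL : 0 < L) (hd : L < d) : Real.cos (Real.arccos (L/d)) = L/d := by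
  have h0 : (0:ℝ) ≤ L/d := (div_pos hL (hL.trans hd)).le
  refine Real.cos_arccos (by linarith) ?_
  rw [div_le_one (by linarith)]; exact hd.le

lemma T_pos (hL : 0 < L) (hd : L < d) : 0 < Real.arccos (L/d) := by
  rw [Real.arccos_pos, div_lt_one (by linarith)]; exact hd

lemma T_lt (hL : 0 < L) (hd : L < d) : Real.arccos (L/d) < Real.pi / 2 := by
  rw [Real.arccos_lt_pi_div_two]; exact div_pos hL (hL.trans hd)

-- `d·sin θ ≤ db` whenever `sin θ ≥ 0`.
lemma q_le (hL : 0 < L) (hd : L < d) {θ : ℝ} (hs : 0 ≤ Real.sin θ) :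
    d * Real.sin θ ≤ db L d θ := by
  rw [db_eq L d θ, Real.le_sqrt (mul_nonneg (by linarith : (0:ℝ) ≤ d) hs) (uu_pos hL hd θ).le, uu]
  nlinarith [sq_nonneg (L - d * Real.cos θ), Real.sin_sq_add_cos_sq θ]

lemma q_mem (hL : 0 < L) (hd : L < d) {θ : ℝ} (hs : 0 ≤ Real.sin θ) :
    d * Real.sin θ / db L d θ ∈ Icc (-1 : ℝ) 1 := by
  constructor
  · have : (0:ℝ) ≤ d * Real.sin θ / db L d θ :=
      div_nonneg (mul_nonneg (by linarith) hs) (db_pos hL hd θ).le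
    linarith
  · rw [div_le_one (db_pos hL hd θ)]; exact q_le hL hd hs

-- θb strictly decreasing on [arccos(L/d), π/2]
lemma θb_lt_right (hL : 0 < L) (hd : L < d) {x y : ℝ}
    (hx : Real.arccos (L/d) ≤ x) (hy : y ≤ Real.pi/2) (hxy : x < y) :
    θb L d y < θb L d x := by
  have hx0 : 0 ≤ x := (Real.arccos_nonneg _).trans hx
  have hyπ : y ≤ Real.pi := hy.trans (by linarith [Real.pi_pos])
  have hsy : 0 ≤ Real.sin y := Real.sin_nonneg_of_nonneg_of_le_pi (hx0.trans hxy.le) hyπ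
  have hsx : 0 ≤ Real.sin x := Real.sin_nonneg_of_nonneg_of_le_pi hx0 (by linarith)
  have hclt : Real.cos y < Real.cos x := Real.cos_lt_cos_of_nonneg_of_le_pi hx0 hyπ hxy
  have hcy : 0 ≤ Real.cos y := Real.cos_nonneg_of_mem_Icc ⟨by linarith [Real.pi_pos], hy⟩
  have hcx : d * Real.cos x ≤ L := by
    have h1 : Real.cos x ≤ Real.cos (Real.arccos (L/d)) :=
      Real.cos_le_cos_of_nonneg_of_le_pi (Real.arccos_nonneg _) (by linarith) hx
    rw [cosT hL hd] at h1
    calc d * Real.cos x ≤ d * (L/d) := by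
          exact mul_le_mul_of_nonneg_left h1 (by linarith)
      _ = L := by rw [mul_div_cancel₀ _ (by linarith : d ≠ 0)]
  have key : (1 - Real.cos y ^2) * uu L d x < (1 - Real.cos x ^2) * uu L d y := by
    have := claimA hL hd hcy hclt hcx
    rw [uu]; rw [uu]; linarith
  rw [← sin_sq' x, ← sin_sq' y] at key
  have hqlt : d * Real.sin y / db L d y < d * Real.sin x / db L d x := by
    have h2 : (d * Real.sin y / db L d y)^2 < (d * Real.sin x / db L d x)^2 := by
      rw [div_pow, div_pow, db_sq hL hd, db_sq hL hd,
        div_lt_div_iff₀ (uu_pos hL hd y) (uu_pos hL hd x), mul_pow]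
      rw [mul_pow]
      nlinarith [mul_lt_mul_of_pos_left key (pow_pos (hL.trans hd) 2)]
    exact lt_of_pow_lt_pow_left₀ 2
      (div_nonneg (mul_nonneg (hL.trans hd).le hsx) (db_pos hL hd x).le) h2
  exact Real.strictMonoOn_arcsin (q_mem hL hd hsy) (q_mem hL hd hsx) hqlt

-- θb strictly increasing on [0, arccos(L/d)]
lemma θb_lt_left (hL : 0 < L) (hd : L < d) {x y : ℝ}
    (hx : 0 ≤ x) (hy : y ≤ Real.arccos (L/d)) (hxy : x < y) :
    θb L d x < θb L d y := by
  have hTπ : Real.arccos (L/d) ≤ Real.pi := Real.arccos_le_pi _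
  have hyπ : y ≤ Real.pi := hy.trans hTπ
  have hy2 : y ≤ Real.pi/2 := hy.trans (T_lt hL hd).le
  have hsy : 0 ≤ Real.sin y := Real.sin_nonneg_of_nonneg_of_le_pi (hx.trans hxy.le) hyπ
  have hsx : 0 ≤ Real.sin x := Real.sin_nonneg_of_nonneg_of_le_pi hx (by linarith)
  have hclt : Real.cos y < Real.cos x := Real.cos_lt_cos_of_nonneg_of_le_pi hx hyπ hxy
  have hcx1 : Real.cos x ≤ 1 := Real.cos_le_one x
  have hcy : L ≤ d * Real.cos y := by
    have h1 : Real.cos (Real.arccos (L/d)) ≤ Real.cos y :=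
      Real.cos_le_cos_of_nonneg_of_le_pi (hx.trans hxy.le) hTπ hy
    rw [cosT hL hd] at h1
    calc L = d * (L/d) := by rw [mul_div_cancel₀ _ (by linarith : d ≠ 0)]
      _ ≤ d * Real.cos y := mul_le_mul_of_nonneg_left h1 (by linarith)
  have key : (1 - Real.cos x ^2) * uu L d y < (1 - Real.cos y ^2) * uu L d x := by
    have := claimB hL hd hcy hclt hcx1
    rw [uu]; rw [uu]; linarith
  rw [← sin_sq' x, ← sin_sq' y] at key
  have hqlt : d * Real.sin x / db L d x < d * Real.sin y / db L d y := by
    have h2 : (d * Real.sin x / db L d x)^2 < (d * Real.sin y / db L d y)^2 := by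
      rw [div_pow, div_pow, db_sq hL hd, db_sq hL hd,
        div_lt_div_iff₀ (uu_pos hL hd x) (uu_pos hL hd y), mul_pow, mul_pow]
      nlinarith [mul_lt_mul_of_pos_left key (pow_pos (hL.trans hd) 2)]
    exact lt_of_pow_lt_pow_left₀ 2
      (div_nonneg (mul_nonneg (hL.trans hd).le hsy) (db_pos hL hd y).le) h2
  exact Real.strictMonoOn_arcsin (q_mem hL hd hsx) (q_mem hL hd hsy) hqlt

lemma pb_lt_of_θb_lt (ha : 0 < a) (hb : 0 < b) {x y : ℝ} (h : θb L d x < θb L d y) :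
    pb a b L d x < pb a b L d y := by
  have hk : (0:ℝ) < 180 / Real.pi := k_pos
  have hE : EE a b L d y < EE a b L d x := by
    rw [EE, EE]
    apply Real.exp_lt_exp.2
    have : (180 / Real.pi) * θb L d x < (180 / Real.pi) * θb L d y :=
      mul_lt_mul_of_pos_left h hk
    nlinarith
  rw [pb_eq, pb_eq]
  apply inv_strictAnti₀ (den_pos ha y)
  have := EE_pos a b L d y
  nlinarith

end Mono

section Parts

variable {a b L ξL d : ℝ}

lemma part1 (ha : 0 < a) (hb : 0 < b) (hL : 0 < L) (hξ : ξL < 0) (hd : L < d) :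
    StrictAntiOn (fun θ => f a b L ξL d θ) (Icc (Real.arccos (L/d)) (Real.pi/2)) := by
  intro x hx y hy hxy
  have hdblt : db L d x < db L d y := by
    rw [db_eq L d x, db_eq L d y]
    apply Real.sqrt_lt_sqrt (uu_pos hL hd x).le
    have hclt : Real.cos y < Real.cos x :=
      Real.cos_lt_cos_of_nonneg_of_le_pi ((Real.arccos_nonneg _).trans hx.1)
        (hy.2.trans (by linarith [Real.pi_pos])) hxy
    have hdL : 0 < d * L := mul_pos (hL.trans hd) hL
    rw [uu, uu]; nlinarith
  have h1 : db L d y ^ ξL < db L d x ^ ξL :=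
    Real.rpow_lt_rpow_of_neg (db_pos hL hd x) hdblt hξ
  have h2 : pb a b L d y < pb a b L d x :=
    pb_lt_of_θb_lt ha hb (θb_lt_right hL hd hx.1 hy.2 hxy)
  exact mul_lt_mul'' h1 h2 (Real.rpow_pos_of_pos (db_pos hL hd y) _).le (pb_pos ha y).le

lemma part3 (hL : 0 < L) (hd : L < d) : Gfun L d (Real.arccos (L/d)) = 0 := by
  rw [Gfun, cosT hL hd]
  have hd0 : d ≠ 0 := by linarith
  field_simp
  ring

lemma Afun_pos (ha : 0 < a) (hb : 0 < b) (θ : ℝ) : 0 < Afun a b L d θ := by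
  rw [Afun]
  have h1 := EE_pos a b L d θ
  have h2 := den_pos (a := a) (b := b) (L := L) (d := d) ha θ
  have := Real.pi_pos
  apply mul_pos (by positivity)
  exact div_pos (by positivity) h2

lemma Bfun_zero (ξL L d : ℝ) : Bfun L ξL d 0 = 0 := by
  rw [Bfun, Real.sin_zero]; simp

lemma Afun_anti (ha : 0 < a) (hb : 0 < b) (hL : 0 < L) (hd : L < d) {x y : ℝ}
    (hx : 0 ≤ x) (hy : y ≤ Real.arccos (L/d)) (hxy : x < y) :
    Afun a b L d y < Afun a b L d x := by
  have hθ : θb L d x < θb L d y := θb_lt_left hL hd hx hy hxy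
  have hE : EE a b L d y < EE a b L d x := by
    rw [EE, EE]
    apply Real.exp_lt_exp.2
    have h := mul_lt_mul_of_pos_left hθ (k_pos)
    nlinarith
  rw [Afun, Afun]
  have hbk : (0:ℝ) < b * (180 / Real.pi) := mul_pos hb k_pos
  apply mul_lt_mul_of_pos_left _ hbk
  rw [div_lt_div_iff₀ (den_pos ha y) (den_pos ha x)]
  have h1 := EE_pos a b L d y
  nlinarith

lemma Bfun_mono (hL : 0 < L) (hξ : ξL < 0) (hd : L < d) {x y : ℝ}
    (hx : 0 ≤ x) (hy : y ≤ Real.arccos (L/d)) (hxy : x < y) :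
    Bfun L ξL d x < Bfun L ξL d y := by
  have hTπ2 : Real.arccos (L/d) ≤ Real.pi/2 := (T_lt hL hd).le
  have hy2 : y ≤ Real.pi/2 := hy.trans hTπ2
  set s1 := Real.sin x
  set s2 := Real.sin y
  set c1 := Real.cos x
  set c2 := Real.cos y
  have hpi := Real.pi_pos
  have hs1 : 0 ≤ s1 := Real.sin_nonneg_of_nonneg_of_le_pi hx (by linarith)
  have hs2 : 0 < s2 := Real.sin_pos_of_pos_of_lt_pi (hx.trans_lt hxy) (by linarith)
  have hs12 : s1 < s2 := Real.strictMonoOn_sin ⟨by linarith, by linarith⟩ ⟨by linarith, hy2⟩ hxy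
  have hc2 : L ≤ d * c2 := by
    have h1 : Real.cos (Real.arccos (L/d)) ≤ c2 :=
      Real.cos_le_cos_of_nonneg_of_le_pi (hx.trans hxy.le) (Real.arccos_le_pi _) hy
    rw [cosT hL hd] at h1
    calc L = d * (L/d) := by rw [mul_div_cancel₀ _ (by linarith : d ≠ 0)]
      _ ≤ d * c2 := mul_le_mul_of_nonneg_left h1 (by linarith)
  have hc2' : 0 < c2 := by nlinarith
  have hcos1 : c1*c2 + s1*s2 < 1 := by
    have h0 : Real.cos (y - x) < 1 := by
      have := Real.cos_lt_cos_of_nonneg_of_le_pi (le_refl 0) (by linarith : y - x ≤ Real.pi)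
        (by linarith : (0:ℝ) < y - x)
      rw [Real.cos_zero] at this
      linarith
    rw [Real.cos_sub] at h0
    nlinarith
  have hpy1 : s1^2 + c1^2 = 1 := Real.sin_sq_add_cos_sq x
  have hpy2 : s2^2 + c2^2 = 1 := Real.sin_sq_add_cos_sq y
  have hden1 : 0 < d - L * c1 := dLc_pos hL hd x
  have hden2 : 0 < d - L * c2 := dLc_pos hL hd y
  rw [Bfun, Bfun, div_lt_div_iff₀ hden1 hden2]
  have hm : s1*s2^2 + s1*c2^2 = s1 := by nlinarith [hpy2]
  have hkey : s1 * (d - L*c2) < s2 * (d - L*c1) := by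
    nlinarith [mul_nonneg (sub_nonneg.2 hs12.le) (sub_nonneg.2 hc2),
      mul_pos (mul_pos hL hs2) (by linarith : (0:ℝ) < 1 - c1*c2 - s1*s2),
      hm, mul_pos hc2' hs2]
  have hml : (0:ℝ) < (-ξL) * L := mul_pos (by linarith) hL
  calc (-ξL) * L * s1 * (d - L * c2) = ((-ξL) * L) * (s1 * (d - L*c2)) := by ring
    _ < ((-ξL) * L) * (s2 * (d - L*c1)) := mul_lt_mul_of_pos_left hkey hml
    _ = (-ξL) * L * s2 * (d - L * c1) := by ring

lemma Dfun_anti (ha : 0 < a) (hb : 0 < b) (hL : 0 < L) (hξ : ξL < 0) (hd : L < d) :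
    StrictAntiOn (fun θ => Dfun a b L ξL d θ) (Icc 0 (Real.arccos (L/d))) := by
  intro x hx y hy hxy
  simp only [Dfun]
  have h1 := Afun_anti ha hb hL hd hx.1 hy.2 hxy
  have h2 := Bfun_mono hL hξ hd hx.1 hy.2 hxy
  linarith

lemma Dfun_zero_pos (ha : 0 < a) (hb : 0 < b) (hL : 0 < L) (hξ : ξL < 0) (hd : L < d) :
    0 < Dfun a b L ξL d 0 := by
  rw [Dfun, Bfun_zero]
  simpa using Afun_pos ha hb 0

end Parts

section Deriv

variable {a b L ξL d : ℝ}

lemma hsum (L d : ℝ) (θ : ℝ) :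
    (d * Real.sin θ)^2 + (d * Real.cos θ - L)^2 = uu L d θ := by
  rw [uu]
  linear_combination d^2 * Real.sin_sq_add_cos_sq θ

lemma θb_eq_arctan (hL : 0 < L) (hd : L < d) {θ : ℝ} (hs : 0 < Real.sin θ)
    (hc : L < d * Real.cos θ) :
    θb L d θ = Real.arctan (d * Real.sin θ / (d * Real.cos θ - L)) := by
  have hu := uu_pos hL hd θ
  have hdb := db_pos hL hd θ
  have hd0 : 0 < d := hL.trans hd
  have hq1 : d * Real.sin θ / db L d θ < 1 := by
    rw [div_lt_one hdb, db_eq L d θ]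
    apply Real.lt_sqrt_of_sq_lt
    nlinarith [hsum L d θ, pow_pos (by linarith : (0:ℝ) < d * Real.cos θ - L) 2]
  have hq0 : 0 < d * Real.sin θ / db L d θ := div_pos (mul_pos hd0 hs) hdb
  rw [θb, Real.arcsin_eq_arctan ⟨by linarith, hq1⟩]
  congr 1
  have h1q : 1 - (d * Real.sin θ / db L d θ)^2 = ((d * Real.cos θ - L) / db L d θ)^2 := by
    rw [div_pow, div_pow, db_sq hL hd]
    field_simp
    linear_combination - hsum L d θ
  rw [h1q, Real.sqrt_sq (div_nonneg (by linarith) hdb.le)]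
  rw [div_div_div_cancel_right₀]
  · exact hdb.ne'

set_option maxHeartbeats 1000000 in
lemma hasDeriv (ha : 0 < a) (hb : 0 < b) (hL : 0 < L) (hξ : ξL < 0) (hd : L < d)
    {x : ℝ} (hx : x ∈ Ioo 0 (Real.arccos (L/d))) :
    HasDerivAt (fun θ => f a b L ξL d θ)
      (f a b L ξL d x * (d / uu L d x) * ((d - L * Real.cos x) * Dfun a b L ξL d x)) x := by
  obtain ⟨hx0, hxT⟩ := hx
  have hpi := Real.pi_pos
  have hd0 : 0 < d := hL.trans hd
  have hT2 := T_lt hL hd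
  have hs : 0 < Real.sin x :=
    Real.sin_pos_of_pos_of_lt_pi hx0 (by linarith [hxT.trans_le hT2.le])
  have hc : L < d * Real.cos x := by
    have h1 : Real.cos (Real.arccos (L/d)) < Real.cos x :=
      Real.cos_lt_cos_of_nonneg_of_le_pi hx0.le (Real.arccos_le_pi _) hxT
    rw [cosT hL hd] at h1
    calc L = d * (L/d) := by rw [mul_div_cancel₀ _ hd0.ne']
      _ < d * Real.cos x := mul_lt_mul_of_pos_left h1 hd0
  have hu := uu_pos hL hd x
  have hdb := db_pos hL hd x
  have hdcL : 0 < d * Real.cos x - L := by linarith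
  -- the function with arctan instead of arcsin
  set g : ℝ → ℝ := fun θ => db L d θ ^ ξL *
      (1 + a * Real.exp (-b * (180 / Real.pi *
        Real.arctan (d * Real.sin θ / (d * Real.cos θ - L)) - a)))⁻¹ with hgdef
  have hfg : ∀ θ ∈ Ioo (0:ℝ) (Real.arccos (L/d)), f a b L ξL d θ = g θ := by
    intro θ hθ
    have hsθ : 0 < Real.sin θ :=
      Real.sin_pos_of_pos_of_lt_pi hθ.1 (by linarith [hθ.2.trans_le hT2.le])
    have hcθ : L < d * Real.cos θ := by
      have h1 : Real.cos (Real.arccos (L/d)) < Real.cos θ :=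
        Real.cos_lt_cos_of_nonneg_of_le_pi hθ.1.le (Real.arccos_le_pi _) hθ.2
      rw [cosT hL hd] at h1
      calc L = d * (L/d) := by rw [mul_div_cancel₀ _ hd0.ne']
        _ < d * Real.cos θ := mul_lt_mul_of_pos_left h1 hd0
    rw [f, pb, θb_eq_arctan hL hd hsθ hcθ, one_div]
  have hev : (fun θ => f a b L ξL d θ) =ᶠ[nhds x] g :=
    Filter.eventuallyEq_of_mem (Ioo_mem_nhds hx0 hxT) hfg
  -- derivative chain for g
  have hu' : HasDerivAt (fun θ => uu L d θ) (2*d*L*Real.sin x) x := by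
    have h := (hasDerivAt_const x (L^2+d^2)).sub ((Real.hasDerivAt_cos x).const_mul (2*d*L))
    simp only [uu]
    exact h.congr_deriv (by ring)
  have hdb' : HasDerivAt (fun θ => db L d θ) (2*d*L*Real.sin x / (2 * db L d x)) x := by
    have h := hu'.sqrt hu.ne'
    exact h
  have h1 : HasDerivAt (fun θ => db L d θ ^ ξL)
      ((2*d*L*Real.sin x / (2 * db L d x)) * ξL * db L d x ^ (ξL - 1)) x :=
    hdb'.rpow_const (Or.inl hdb.ne')
  have hnum : HasDerivAt (fun θ => d * Real.sin θ) (d * Real.cos x) x :=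
    (Real.hasDerivAt_sin x).const_mul d
  have hdenv : HasDerivAt (fun θ => d * Real.cos θ - L) (d * (-Real.sin x)) x :=
    ((Real.hasDerivAt_cos x).const_mul d).sub_const L
  have hv : HasDerivAt (fun θ => d * Real.sin θ / (d * Real.cos θ - L))
      ((d * Real.cos x * (d * Real.cos x - L) - d * Real.sin x * (d * (-Real.sin x))) /
        (d * Real.cos x - L)^2) x := hnum.div hdenv hdcL.ne'
  have hnumeq : (d * Real.cos x * (d * Real.cos x - L) - d * Real.sin x * (d * (-Real.sin x)))
      = d * (d - L * Real.cos x) := by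
    linear_combination d^2 * Real.sin_sq_add_cos_sq x
  rw [hnumeq] at hv
  have hat : HasDerivAt (fun θ => Real.arctan (d * Real.sin θ / (d * Real.cos θ - L)))
      (1 / (1 + (d * Real.sin x / (d * Real.cos x - L))^2) *
        (d * (d - L * Real.cos x) / (d * Real.cos x - L)^2)) x := hv.arctan
  have hin : HasDerivAt (fun θ => -b * (180 / Real.pi *
      Real.arctan (d * Real.sin θ / (d * Real.cos θ - L)) - a))
      (-b * (180 / Real.pi * (1 / (1 + (d * Real.sin x / (d * Real.cos x - L))^2) *
        (d * (d - L * Real.cos x) / (d * Real.cos x - L)^2)))) x := by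
    have h := ((hat.const_mul (180 / Real.pi)).sub_const a).const_mul (-b)
    convert h using 1
  have hE := hin.exp
  have hden2 := (hE.const_mul a).const_add 1
  have hEx : (0:ℝ) < 1 + a * Real.exp (-b * (180 / Real.pi *
      Real.arctan (d * Real.sin x / (d * Real.cos x - L)) - a)) := by
    have h := den_pos (b := b) (L := L) (d := d) ha x
    rwa [EE, θb_eq_arctan hL hd hs hc] at h
  have hinv := hden2.inv hEx.ne'
  have hg' := h1.mul hinv
  apply HasDerivAt.congr_of_eventuallyEq _ hev
  refine hg'.congr_deriv ?_
  symm
  simp only [Pi.inv_apply]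
  simp only [Dfun, Afun, Bfun, f, pb, EE, θb_eq_arctan hL hd hs hc]
  have hvsq : 1 + (d * Real.sin x / (d * Real.cos x - L))^2
      = uu L d x / (d * Real.cos x - L)^2 := by
    field_simp
    linear_combination hsum L d x
  rw [hvsq, Real.rpow_sub hdb, Real.rpow_one,
    show uu L d x = db L d x ^ 2 from (db_sq hL hd x).symm]
  set DB := db L d x with hDB
  set E := Real.exp (-b * (180 / Real.pi *
    Real.arctan (d * Real.sin x / (d * Real.cos x - L)) - a)) with hE2
  set S := Real.sin x
  set C := Real.cos x
  have hne1 : DB ≠ 0 := hdb.ne'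
  have hne2 : (1:ℝ) + a * E ≠ 0 := hEx.ne'
  have hne3 : d * C - L ≠ 0 := hdcL.ne'
  have hne4 : d - L * C ≠ 0 := (dLc_pos hL hd x).ne'
  field_simp
  ring

end Deriv

section Cont

variable {a b L ξL d : ℝ}

lemma cont_db (hL : 0 < L) (hd : L < d) : Continuous (fun θ => db L d θ) := by
  have h : Continuous (fun θ => uu L d θ) := by
    simp only [uu]; fun_prop
  exact Real.continuous_sqrt.comp h

lemma cont_θb (hL : 0 < L) (hd : L < d) : Continuous (fun θ => θb L d θ) := by
  apply Real.continuous_arcsin.comp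
  exact (continuous_const.mul Real.continuous_sin).div (cont_db hL hd)
    (fun θ => (db_pos hL hd θ).ne')

lemma cont_EE (hL : 0 < L) (hd : L < d) : Continuous (fun θ => EE a b L d θ) := by
  apply Real.continuous_exp.comp
  exact continuous_const.mul ((continuous_const.mul (cont_θb hL hd)).sub continuous_const)

lemma cont_f (ha : 0 < a) (hL : 0 < L) (hd : L < d) :
    Continuous (fun θ => f a b L ξL d θ) := by
  have h1 : Continuous (fun θ => db L d θ ^ ξL) :=
    (cont_db hL hd).rpow_const (fun θ => Or.inl (db_pos hL hd θ).ne')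
  have h2 : Continuous (fun θ => (1 + a * EE a b L d θ)⁻¹) :=
    (continuous_const.add (continuous_const.mul (cont_EE hL hd))).inv₀
      (fun θ => (den_pos ha θ).ne')
  have h3 : Continuous (fun θ => pb a b L d θ) :=
    h2.congr (fun θ => (pb_eq a b L d θ).symm)
  exact h1.mul h3

lemma cont_D (ha : 0 < a) (hL : 0 < L) (hd : L < d) :
    Continuous (fun θ => Dfun a b L ξL d θ) := by
  have hA : Continuous (fun θ => Afun a b L d θ) := by
    simp only [Afun]
    exact continuous_const.mul ((continuous_const.mul (cont_EE hL hd)).div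
      (continuous_const.add (continuous_const.mul (cont_EE hL hd)))
      (fun θ => (den_pos ha θ).ne'))
  have hB : Continuous (fun θ => Bfun L ξL d θ) := by
    simp only [Bfun]
    exact (continuous_const.mul Real.continuous_sin).div
      (continuous_const.sub (continuous_const.mul Real.continuous_cos))
      (fun θ => (dLc_pos hL hd θ).ne')
  simp only [Dfun]
  exact hA.sub hB

end Cont

end Stmt11Aux

/-- Lemma 3: for fixed `d > L`, `θ ↦ f(d, θ)` is strictly decreasing on
`[arccos(L/d), π/2]`, has a unique global maximizer `θ°` over `[0, π/2]` lying in
`[0, arccos(L/d)]`, and `G(arccos(L/d)) = 0`. -/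
theorem stmt_11 (a b L ξL d : ℝ) (ha : 0 < a) (hb : 0 < b) (hL : 0 < L)
    (hξ : ξL < 0) (hd : L < d) :
    StrictAntiOn (fun θ => f a b L ξL d θ)
      (Set.Icc (Real.arccos (L / d)) (Real.pi / 2)) ∧
    (∃ θ0 : ℝ, θ0 ∈ Set.Icc 0 (Real.arccos (L / d)) ∧
      ∀ θ ∈ Set.Icc 0 (Real.pi / 2), θ ≠ θ0 → f a b L ξL d θ < f a b L ξL d θ0) ∧
    Gfun L d (Real.arccos (L / d)) = 0 := by
  open Stmt11Aux in
  refine ⟨part1 ha hb hL hξ hd, ?_, part3 hL hd⟩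
  have hd0 : 0 < d := hL.trans hd
  have hT0 := Stmt11Aux.T_pos hL hd
  have hT2 := (Stmt11Aux.T_lt hL hd).le
  have hcont := Stmt11Aux.cont_f (ξL := ξL) (b := b) ha hL hd
  have hDanti := Stmt11Aux.Dfun_anti ha hb hL hξ hd
  have hderivpos : ∀ x ∈ Set.Ioo (0:ℝ) (Real.arccos (L/d)),
      0 < Stmt11Aux.Dfun a b L ξL d x → 0 < deriv (fun θ => f a b L ξL d θ) x := by
    intro x hx hD
    rw [(Stmt11Aux.hasDeriv ha hb hL hξ hd hx).deriv]
    exact mul_pos (mul_pos (Stmt11Aux.f_pos ha hL hd x)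
        (div_pos hd0 (Stmt11Aux.uu_pos hL hd x)))
      (mul_pos (Stmt11Aux.dLc_pos hL hd x) hD)
  by_cases hcase : 0 ≤ Stmt11Aux.Dfun a b L ξL d (Real.arccos (L/d))
  · -- maximizer is θ* itself
    have hmono : StrictMonoOn (fun θ => f a b L ξL d θ) (Set.Icc 0 (Real.arccos (L/d))) := by
      apply strictMonoOn_of_deriv_pos (convex_Icc _ _) hcont.continuousOn
      intro x hx
      rw [interior_Icc] at hx
      apply hderivpos x hx
      have := hDanti (Set.mem_Icc.2 ⟨hx.1.le, hx.2.le⟩)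
        (Set.mem_Icc.2 ⟨hT0.le, le_refl _⟩) hx.2
      linarith
    refine ⟨Real.arccos (L/d), Set.mem_Icc.2 ⟨hT0.le, le_refl _⟩, ?_⟩
    intro θ hθ hne
    rcases lt_or_gt_of_ne hne with h | h
    · exact hmono (Set.mem_Icc.2 ⟨hθ.1, h.le⟩) (Set.mem_Icc.2 ⟨hT0.le, le_refl _⟩) h
    · exact Stmt11Aux.part1 ha hb hL hξ hd (Set.mem_Icc.2 ⟨le_refl _, hT2⟩)
        (Set.mem_Icc.2 ⟨h.le, hθ.2⟩) h
  · -- interior maximizer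
    push_neg at hcase
    have hD0 := Stmt11Aux.Dfun_zero_pos ha hb hL hξ hd
    have hIVT := intermediate_value_Icc' hT0.le
      (Stmt11Aux.cont_D (ξL := ξL) (b := b) ha hL hd).continuousOn
    obtain ⟨θ0, hθ0mem, hθ0eq⟩ := hIVT ⟨hcase.le, hD0.le⟩
    have hθ0gt : 0 < θ0 := by
      rcases eq_or_lt_of_le hθ0mem.1 with h | h
      · exfalso; rw [← h] at hθ0eq; simp at hθ0eq; linarith
      · exact h
    have hθ0lt : θ0 < Real.arccos (L/d) := by
      rcases eq_or_lt_of_le hθ0mem.2 with h | h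
      · exfalso; rw [h] at hθ0eq; simp at hθ0eq; linarith
      · exact h
    have hmono : StrictMonoOn (fun θ => f a b L ξL d θ) (Set.Icc 0 θ0) := by
      apply strictMonoOn_of_deriv_pos (convex_Icc _ _) hcont.continuousOn
      intro x hx
      rw [interior_Icc] at hx
      apply hderivpos x ⟨hx.1, hx.2.trans hθ0lt⟩
      have := hDanti (Set.mem_Icc.2 ⟨hx.1.le, (hx.2.trans hθ0lt).le⟩) hθ0mem hx.2
      simp only at hθ0eq
      linarith
    have hanti : StrictAntiOn (fun θ => f a b L ξL d θ) (Set.Icc θ0 (Real.arccos (L/d))) := by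
      apply strictAntiOn_of_deriv_neg (convex_Icc _ _) hcont.continuousOn
      intro x hx
      rw [interior_Icc] at hx
      have hxIoo : x ∈ Set.Ioo (0:ℝ) (Real.arccos (L/d)) := ⟨hθ0gt.trans hx.1, hx.2⟩
      rw [(Stmt11Aux.hasDeriv ha hb hL hξ hd hxIoo).deriv]
      have hDx : Stmt11Aux.Dfun a b L ξL d x < 0 := by
        have := hDanti hθ0mem (Set.mem_Icc.2 ⟨hxIoo.1.le, hx.2.le⟩) hx.1
        simp only at hθ0eq
        linarith
      exact mul_neg_of_pos_of_neg (mul_pos (Stmt11Aux.f_pos ha hL hd x)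
          (div_pos hd0 (Stmt11Aux.uu_pos hL hd x)))
        (mul_neg_of_pos_of_neg (Stmt11Aux.dLc_pos hL hd x) hDx)
    refine ⟨θ0, hθ0mem, ?_⟩
    intro θ hθ hne
    rcases lt_trichotomy θ θ0 with h | h | h
    · exact hmono (Set.mem_Icc.2 ⟨hθ.1, h.le⟩) (Set.mem_Icc.2 ⟨hθ0mem.1, le_refl _⟩) h
    · exact absurd h hne
    · rcases le_or_gt θ (Real.arccos (L/d)) with h2 | h2
      · exact hanti (Set.mem_Icc.2 ⟨le_refl _, hθ0lt.le⟩) (Set.mem_Icc.2 ⟨h.le, h2⟩) h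
      · have h3 : f a b L ξL d (Real.arccos (L/d)) < f a b L ξL d θ0 :=
          hanti (Set.mem_Icc.2 ⟨le_refl _, hθ0lt.le⟩)
            (Set.mem_Icc.2 ⟨hθ0lt.le, le_refl _⟩) hθ0lt
        have h4 : f a b L ξL d θ < f a b L ξL d (Real.arccos (L/d)) :=
          Stmt11Aux.part1 ha hb hL hξ hd (Set.mem_Icc.2 ⟨le_refl _, hT2⟩)
            (Set.mem_Icc.2 ⟨h2.le, hθ.2⟩) h2
        linarith
end

section
/- (Theorem 1, Scenario 1) Suppose 0 < θ̲ < π/2, 0 < d̲ < d̄, and d̄ ≤ L·cos θ̲. If (P*, d*, θ*) maximizes γ_b(P, d, θ) over all (P, d, θ) with 0 < P ≤ P_m, D01(P, d, θ) ≤ 2ε², d̲ ≤ d ≤ d̄, and θ̲ ≤ θ ≤ π/2 (where P_m > 0 and ε > 0), then d* = d̄ and θ̲ ≤ θ* ≤ arccos(d̄/L); this holds regardless of the value of the maximum transmit power P_m. -/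
/-- Effective SNR at Bob: `γ_b(P, d, θ) = P·f(d, θ)/σ_b²`. -/
noncomputable def γb (a b L ξL σb2 P d θ : ℝ) : ℝ :=
  P * f a b L ξL d θ / σb2

/-- Probability of a LoS component in the UAV-to-Willie channel. -/
noncomputable def pw (a b θ : ℝ) : ℝ :=
  1 / (1 + a * Real.exp (-b * ((180 / Real.pi) * θ - a)))

/-- Effective received power at Willie: `P̄(P, d, θ) = P·(d^{ξ_L}·p_w(θ) + d^{ξ_N})`. -/
noncomputable def Pbar (a b ξL ξN P d θ : ℝ) : ℝ :=
  P * (d ^ ξL * pw a b θ + d ^ ξN)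

/-- The KL divergence `D01(P, d, θ)`. -/
noncomputable def D01 (a b ξL ξN σw2 : ℝ) (n : ℕ) (P d θ : ℝ) : ℝ :=
  ((n : ℝ) / 2) * (Real.log ((Pbar a b ξL ξN P d θ + σw2) / σw2) -
    Pbar a b ξL ξN P d θ / (Pbar a b ξL ξN P d θ + σw2))


lemma db_eq (L d θ : ℝ) : db L d θ = Real.sqrt (L ^ 2 + d ^ 2 - 2 * d * L * Real.cos θ) := rfl

lemma θb_eq (L d θ : ℝ) : θb L d θ = Real.arcsin (d * Real.sin θ / db L d θ) := rfl

lemma pb_eq (a b L d θ : ℝ) : pb a b L d θ = pw a b (θb L d θ) := rfl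

lemma pw_pos {a : ℝ} (b θ : ℝ) (ha : 0 < a) : 0 < pw a b θ := by
  have h := Real.exp_pos (-b * ((180 / Real.pi) * θ - a))
  have : 0 < 1 + a * Real.exp (-b * ((180 / Real.pi) * θ - a)) := by nlinarith
  unfold pw
  positivity

lemma pw_mono {a b : ℝ} (ha : 0 < a) (hb : 0 < b) {θ1 θ2 : ℝ} (h : θ1 ≤ θ2) :
    pw a b θ1 ≤ pw a b θ2 := by
  have hc : (0:ℝ) < 180 / Real.pi := by positivity
  have h1 : (180 / Real.pi) * θ1 ≤ (180 / Real.pi) * θ2 := mul_le_mul_of_nonneg_left h hc.le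
  have h2 : b * ((180 / Real.pi) * θ1) ≤ b * ((180 / Real.pi) * θ2) :=
    mul_le_mul_of_nonneg_left h1 hb.le
  have he : Real.exp (-b * ((180 / Real.pi) * θ2 - a)) ≤
      Real.exp (-b * ((180 / Real.pi) * θ1 - a)) := by
    apply Real.exp_le_exp.mpr; nlinarith
  have hp2 : 0 < 1 + a * Real.exp (-b * ((180 / Real.pi) * θ2 - a)) := by
    nlinarith [Real.exp_pos (-b * ((180 / Real.pi) * θ2 - a))]
  unfold pw
  apply one_div_le_one_div_of_le hp2
  nlinarith

lemma le_of_sq_le_sq' {A B : ℝ} (hA : 0 ≤ A) (hB : 0 ≤ B) (h : A ^ 2 ≤ B ^ 2) : A ≤ B := by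
  calc A = Real.sqrt (A ^ 2) := (Real.sqrt_sq hA).symm
    _ ≤ Real.sqrt (B ^ 2) := Real.sqrt_le_sqrt h
    _ = B := Real.sqrt_sq hB

lemma div_sqrt_le {x1 x2 q1 q2 : ℝ} (hx1 : 0 ≤ x1) (hx2 : 0 ≤ x2) (hq1 : 0 < q1)
    (hq2 : 0 < q2) (h : x1 ^ 2 * q2 ≤ x2 ^ 2 * q1) :
    x1 / Real.sqrt q1 ≤ x2 / Real.sqrt q2 := by
  rw [div_le_div_iff₀ (Real.sqrt_pos.mpr hq1) (Real.sqrt_pos.mpr hq2)]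
  apply le_of_sq_le_sq' (mul_nonneg hx1 (Real.sqrt_nonneg _))
    (mul_nonneg hx2 (Real.sqrt_nonneg _))
  rw [mul_pow, mul_pow, Real.sq_sqrt hq1.le, Real.sq_sqrt hq2.le]
  linarith

lemma gmono {σ x y : ℝ} (hσ : 0 < σ) (hx : 0 ≤ x) (hxy : x ≤ y) :
    Real.log ((x + σ) / σ) - x / (x + σ) ≤ Real.log ((y + σ) / σ) - y / (y + σ) := by
  have hu : 0 < x + σ := by linarith
  have hv : 0 < y + σ := by linarith
  have hlog : Real.log ((y + σ) / σ) - Real.log ((x + σ) / σ) = Real.log ((y + σ) / (x + σ)) := by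
    rw [Real.log_div hv.ne' hσ.ne', Real.log_div hu.ne' hσ.ne', Real.log_div hv.ne' hu.ne']
    ring
  have hkey : 1 - (x + σ) / (y + σ) ≤ Real.log ((y + σ) / (x + σ)) := by
    have h := Real.one_sub_inv_le_log_of_pos (div_pos hv hu)
    rwa [inv_div] at h
  have e1 : y / (y + σ) - x / (x + σ) ≤ 1 - (x + σ) / (y + σ) := by
    rw [div_sub_div _ _ hv.ne' hu.ne']
    have e2 : 1 - (x + σ) / (y + σ) = (y - x) / (y + σ) := by field_simp; ring
    rw [e2, div_le_div_iff₀ (by positivity) hv]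
    nlinarith [mul_nonneg (mul_nonneg (sub_nonneg.2 hxy) hv.le) hx]
  linarith

lemma Pbar_le {a b ξL ξN P d1 θ1 d2 θ2 : ℝ} (ha : 0 < a) (hb : 0 < b)
    (hξL : ξL < 0) (hξN : ξN < 0) (hP : 0 < P) (hd1 : 0 < d1)
    (hdd : d1 ≤ d2) (hθ : θ2 ≤ θ1) :
    Pbar a b ξL ξN P d2 θ2 ≤ Pbar a b ξL ξN P d1 θ1 := by
  unfold Pbar
  apply mul_le_mul_of_nonneg_left _ hP.le
  have h1 := Real.rpow_le_rpow_of_nonpos hd1 hdd hξL.le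
  have h2 := Real.rpow_le_rpow_of_nonpos hd1 hdd hξN.le
  have h3 := pw_mono ha hb hθ
  have h4 : 0 < pw a b θ2 := pw_pos b θ2 ha
  have h5 : (0:ℝ) ≤ d1 ^ ξL := (Real.rpow_pos_of_pos hd1 _).le
  have := mul_le_mul h1 h3 h4.le h5
  linarith

lemma D01_le {a b ξL ξN σw2 : ℝ} {n : ℕ} {P d1 θ1 d2 θ2 : ℝ} (hσw : 0 < σw2)
    (h0 : 0 ≤ Pbar a b ξL ξN P d2 θ2)
    (h : Pbar a b ξL ξN P d2 θ2 ≤ Pbar a b ξL ξN P d1 θ1) :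
    D01 a b ξL ξN σw2 n P d2 θ2 ≤ D01 a b ξL ξN σw2 n P d1 θ1 := by
  unfold D01
  exact mul_le_mul_of_nonneg_left (gmono hσw h0 h) (by positivity)

lemma f_lt {a b L ξL d1 θ1 d2 θ2 : ℝ} (ha : 0 < a) (hb : 0 < b) (hξL : ξL < 0)
    (h2 : 0 < db L d2 θ2) (hlt : db L d2 θ2 < db L d1 θ1)
    (hθb : θb L d1 θ1 ≤ θb L d2 θ2) :
    f a b L ξL d1 θ1 < f a b L ξL d2 θ2 := by
  unfold f
  rw [pb_eq, pb_eq]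
  have hr : db L d1 θ1 ^ ξL < db L d2 θ2 ^ ξL := Real.rpow_lt_rpow_of_neg h2 hlt hξL
  have hp1 : 0 < pw a b (θb L d1 θ1) := pw_pos _ _ ha
  have hp : pw a b (θb L d1 θ1) ≤ pw a b (θb L d2 θ2) := pw_mono ha hb hθb
  calc db L d1 θ1 ^ ξL * pw a b (θb L d1 θ1)
      < db L d2 θ2 ^ ξL * pw a b (θb L d1 θ1) := mul_lt_mul_of_pos_right hr hp1
    _ ≤ db L d2 θ2 ^ ξL * pw a b (θb L d2 θ2) :=
        mul_le_mul_of_nonneg_left hp (Real.rpow_pos_of_pos h2 _).le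

lemma key_ineq (L d θ : ℝ) : L ^ 2 * Real.sin θ ^ 2 ≤ L ^ 2 + d ^ 2 - 2 * d * L * Real.cos θ := by
  have h := Real.sin_sq_add_cos_sq θ
  have h2 : L ^ 2 * Real.sin θ ^ 2 + L ^ 2 * Real.cos θ ^ 2 = L ^ 2 := by
    linear_combination L ^ 2 * h
  nlinarith [sq_nonneg (d - L * Real.cos θ)]

lemma arccos_anti {x y : ℝ} (h : x ≤ y) : Real.arccos y ≤ Real.arccos x := by
  simp only [Real.arccos_eq_pi_div_two_sub_arcsin]
  have := Real.monotone_arcsin h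
  linarith

lemma arccos_sin_sq {L e : ℝ} (hL : 0 < L) (he0 : 0 ≤ e) (heL : e < L) :
    Real.sin (Real.arccos (e / L)) ^ 2 * L ^ 2 = L ^ 2 - e ^ 2 := by
  have h1 : Real.cos (Real.arccos (e / L)) = e / L :=
    Real.cos_arccos (by linarith [div_nonneg he0 hL.le])
      (by rw [div_le_one hL]; exact heL.le)
  have h := Real.sin_sq_add_cos_sq (Real.arccos (e / L))
  rw [h1] at h
  have hne : L ≠ 0 := hL.ne'
  field_simp at h ⊢
  linarith

set_option maxHeartbeats 1000000

/-- Theorem 1 (Scenario 1, `d̄ ≤ L·cos θ̲`): any maximizer `(P*, d*, θ*)` of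
`γ_b` over the feasible set `{0 < P ≤ P_m, D01 ≤ 2ε², d̲ ≤ d ≤ d̄, θ̲ ≤ θ ≤ π/2}`
satisfies `d* = d̄` and `θ̲ ≤ θ* ≤ arccos(d̄/L)`, regardless of `P_m`. -/
theorem stmt_15 (a b L ξL ξN σb2 σw2 Pm ε dlo dhi θlo : ℝ) (n : ℕ)
    (ha : 0 < a) (hb : 0 < b) (hL : 0 < L) (hξL : ξL < 0) (hξN : ξN < 0)
    (hn : 1 ≤ n) (hσb : 0 < σb2) (hσw : 0 < σw2)
    (hθlo : 0 < θlo) (hθlo' : θlo < Real.pi / 2)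
    (hdlo : 0 < dlo) (hd : dlo < dhi) (hscen : dhi ≤ L * Real.cos θlo)
    (hPm : 0 < Pm) (hε : 0 < ε)
    (Pstar dstar θstar : ℝ)
    (hfeas : 0 < Pstar ∧ Pstar ≤ Pm ∧
      D01 a b ξL ξN σw2 n Pstar dstar θstar ≤ 2 * ε ^ 2 ∧
      dlo ≤ dstar ∧ dstar ≤ dhi ∧ θlo ≤ θstar ∧ θstar ≤ Real.pi / 2)
    (hopt : ∀ P d θ : ℝ,
      (0 < P ∧ P ≤ Pm ∧ D01 a b ξL ξN σw2 n P d θ ≤ 2 * ε ^ 2 ∧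
        dlo ≤ d ∧ d ≤ dhi ∧ θlo ≤ θ ∧ θ ≤ Real.pi / 2) →
      γb a b L ξL σb2 P d θ ≤ γb a b L ξL σb2 Pstar dstar θstar) :
    dstar = dhi ∧ θlo ≤ θstar ∧ θstar ≤ Real.arccos (dhi / L) := by
  obtain ⟨hP0, hPPm, hD, hds1, hds2, hθs1, hθs2⟩ := hfeas
  have hπ := Real.pi_pos
  have hcoslo1 : Real.cos θlo < 1 := by
    have h := Real.cos_lt_cos_of_nonneg_of_le_pi (le_refl 0) (by linarith) hθlo
    rwa [Real.cos_zero] at h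
  have hcoslo0 : 0 < Real.cos θlo := Real.cos_pos_of_mem_Ioo ⟨by linarith, hθlo'⟩
  have hdhiL : dhi < L := by
    have h := mul_lt_mul_of_pos_left hcoslo1 hL
    rw [mul_one] at h; linarith only [h, hscen]
  have hdhi0 : 0 < dhi := hdlo.trans hd
  have hds0 : 0 < dstar := hdlo.trans_le hds1
  have hdsL : dstar < L := hds2.trans_lt hdhiL
  have hL2 : (0:ℝ) < L ^ 2 := pow_pos hL 2
  have hsinθs : 0 < Real.sin θstar :=
    Real.sin_pos_of_pos_of_lt_pi (by linarith) (by linarith)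
  have hQs_pos : 0 < L ^ 2 + dstar ^ 2 - 2 * dstar * L * Real.cos θstar := by
    have h1 := key_ineq L dstar θstar
    linarith only [h1, mul_pos (pow_pos hL 2) (pow_pos hsinθs 2)]
  -- the improvement helper: a feasible strictly-better point contradicts optimality
  have contra : ∀ d' θ', dlo ≤ d' → d' ≤ dhi → θlo ≤ θ' → θ' ≤ Real.pi / 2 →
      dstar ≤ d' → θ' ≤ θstar → 0 < db L d' θ' → db L d' θ' < db L dstar θstar →
      θb L dstar θstar ≤ θb L d' θ' → False := by
    intro d' θ' h1 h2 h3 h4 h5 h6 h7 h8 h9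
    have hd'0 : 0 < d' := hdlo.trans_le h1
    have hPb0 : 0 ≤ Pbar a b ξL ξN Pstar d' θ' := by
      unfold Pbar
      have hpw := pw_pos b θ' ha
      have hr1 : (0:ℝ) < d' ^ ξL := Real.rpow_pos_of_pos hd'0 _
      have hr2 : (0:ℝ) < d' ^ ξN := Real.rpow_pos_of_pos hd'0 _
      exact (mul_pos hP0 (by linarith [mul_pos hr1 hpw])).le
    have hPble := Pbar_le (d1 := dstar) (θ1 := θstar) (d2 := d') (θ2 := θ')
      ha hb hξL hξN hP0 hds0 h5 h6
    have hD' : D01 a b ξL ξN σw2 n Pstar d' θ' ≤ 2 * ε ^ 2 :=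
      le_trans (D01_le hσw hPb0 hPble) hD
    have hle := hopt Pstar d' θ' ⟨hP0, hPPm, hD', h1, h2, h3, h4⟩
    have hflt := f_lt (a := a) (b := b) ha hb hξL h7 h8 h9
    have hgt : γb a b L ξL σb2 Pstar dstar θstar < γb a b L ξL σb2 Pstar d' θ' := by
      unfold γb
      exact (div_lt_div_iff_of_pos_right hσb).mpr (mul_lt_mul_of_pos_left hflt hP0)
    linarith only [hle, hgt]
  -- Step 1 : dstar ≤ L cos θstar
  have hstep1 : dstar ≤ L * Real.cos θstar := by
    by_contra hcon
    push_neg at hcon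
    set θ' := Real.arccos (dstar / L) with hθ'def
    have hdl1 : 0 ≤ dstar / L := by positivity
    have hdl2 : dstar / L ≤ 1 := by rw [div_le_one hL]; exact hdsL.le
    have hcosθ' : Real.cos θ' = dstar / L := Real.cos_arccos (by linarith) hdl2
    have hθ'2 : θ' ≤ Real.pi / 2 := Real.arccos_le_pi_div_two.mpr hdl1
    have hθ'0 : 0 ≤ θ' := Real.arccos_nonneg _
    have hθ'lo : θlo ≤ θ' := by
      have hx : dstar / L ≤ Real.cos θlo := by
        rw [div_le_iff₀ hL]; linarith only [hds2, hscen]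
      have h2 : Real.arccos (Real.cos θlo) = θlo :=
        Real.arccos_cos (by linarith) (by linarith)
      calc θlo = Real.arccos (Real.cos θlo) := h2.symm
        _ ≤ θ' := arccos_anti hx
    have hθ'lt : θ' < θstar := by
      by_contra hcc
      push_neg at hcc
      have h := Real.cos_le_cos_of_nonneg_of_le_pi (by linarith) (by linarith) hcc
      rw [hcosθ', div_le_iff₀ hL] at h
      linarith only [h, hcon]
    have hQ'eq : L ^ 2 + dstar ^ 2 - 2 * dstar * L * Real.cos θ' = L ^ 2 - dstar ^ 2 := by
      rw [hcosθ']; field_simp; ring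
    have hQ'pos : (0:ℝ) < L ^ 2 - dstar ^ 2 := by
      have hh := mul_pos (sub_pos.2 hdsL) (show (0:ℝ) < L + dstar by positivity)
      linarith only [hh]
    have hdb'eq : db L dstar θ' = Real.sqrt (L ^ 2 - dstar ^ 2) := by rw [db_eq, hQ'eq]
    have hdb'pos : 0 < db L dstar θ' := by rw [hdb'eq]; exact Real.sqrt_pos.mpr hQ'pos
    have hdblt : db L dstar θ' < db L dstar θstar := by
      rw [hdb'eq, db_eq]
      refine Real.sqrt_lt_sqrt hQ'pos.le ?_
      have h := mul_lt_mul_of_pos_left hcon hds0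
      linarith only [h]
    have hθble : θb L dstar θstar ≤ θb L dstar θ' := by
      rw [θb_eq, θb_eq]
      apply Real.monotone_arcsin
      rw [hdb'eq, db_eq]
      apply div_sqrt_le (by positivity)
        (mul_nonneg hds0.le (Real.sin_nonneg_of_nonneg_of_le_pi hθ'0 (by linarith)))
        hQs_pos hQ'pos
      have hs' : Real.sin θ' ^ 2 * L ^ 2 = L ^ 2 - dstar ^ 2 :=
        arccos_sin_sq hL hds0.le hdsL
      have hk := key_ineq L dstar θstar
      have hmul : dstar ^ 2 * (L ^ 2 - dstar ^ 2) * (L ^ 2 * Real.sin θstar ^ 2) ≤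
          dstar ^ 2 * (L ^ 2 - dstar ^ 2) *
            (L ^ 2 + dstar ^ 2 - 2 * dstar * L * Real.cos θstar) :=
        mul_le_mul_of_nonneg_left hk (mul_nonneg (sq_nonneg dstar) hQ'pos.le)
      have hs2 : (dstar * Real.sin θ') ^ 2 *
            (L ^ 2 + dstar ^ 2 - 2 * dstar * L * Real.cos θstar) * L ^ 2 =
          dstar ^ 2 * (L ^ 2 - dstar ^ 2) *
            (L ^ 2 + dstar ^ 2 - 2 * dstar * L * Real.cos θstar) := by
        linear_combination (dstar ^ 2 *
          (L ^ 2 + dstar ^ 2 - 2 * dstar * L * Real.cos θstar)) * hs'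
      have hG : (dstar * Real.sin θstar) ^ 2 * (L ^ 2 - dstar ^ 2) * L ^ 2 ≤
          (dstar * Real.sin θ') ^ 2 *
            (L ^ 2 + dstar ^ 2 - 2 * dstar * L * Real.cos θstar) * L ^ 2 := by
        rw [hs2]; linarith only [hmul]
      exact le_of_mul_le_mul_right hG hL2
    exact contra dstar θ' hds1 hds2 hθ'lo hθ'2 le_rfl hθ'lt.le hdb'pos hdblt hθble
  -- Step 2 : dstar = dhi
  have hstep2 : dstar = dhi := by
    by_contra hne
    have hlt : dstar < dhi := lt_of_le_of_ne hds2 hne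
    rcases lt_or_eq_of_le hstep1 with hstrict | heq
    · -- dstar < L cos θstar : push d outwards at the same angle
      set d' := min dhi (L * Real.cos θstar) with hd'def
      have h5 : dstar < d' := lt_min hlt hstrict
      have h2 : d' ≤ dhi := min_le_left _ _
      have h1 : dlo ≤ d' := hds1.trans h5.le
      have hd'le : d' ≤ L * Real.cos θstar := min_le_right _ _
      have hd'0 : 0 < d' := hds0.trans h5
      have hQ'pos : 0 < L ^ 2 + d' ^ 2 - 2 * d' * L * Real.cos θstar := by
        have h1' := key_ineq L d' θstar
        linarith only [h1', mul_pos (pow_pos hL 2) (pow_pos hsinθs 2)]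
      have hQlt : L ^ 2 + d' ^ 2 - 2 * d' * L * Real.cos θstar <
          L ^ 2 + dstar ^ 2 - 2 * dstar * L * Real.cos θstar := by
        have hh := mul_pos (sub_pos.mpr h5)
          (show (0:ℝ) < 2 * (L * Real.cos θstar) - dstar - d' by
            linarith only [hstrict, hd'le])
        linarith only [hh]
      have hdb'pos : 0 < db L d' θstar := by
        rw [db_eq]; exact Real.sqrt_pos.mpr hQ'pos
      have hdblt : db L d' θstar < db L dstar θstar := by
        rw [db_eq, db_eq]; exact Real.sqrt_lt_sqrt hQ'pos.le hQlt
      have hθble : θb L dstar θstar ≤ θb L d' θstar := by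
        rw [θb_eq, θb_eq]
        apply Real.monotone_arcsin
        rw [db_eq, db_eq]
        apply div_sqrt_le (by positivity) (by positivity) hQs_pos hQ'pos
        have hdsq : dstar ^ 2 ≤ d' ^ 2 := by
          have h := mul_le_mul h5.le h5.le hds0.le (hds0.trans h5).le
          rw [pow_two, pow_two]; exact h
        have hm : dstar ^ 2 * (L ^ 2 + d' ^ 2 - 2 * d' * L * Real.cos θstar) ≤
            d' ^ 2 * (L ^ 2 + dstar ^ 2 - 2 * dstar * L * Real.cos θstar) :=
          mul_le_mul hdsq hQlt.le hQ'pos.le (sq_nonneg d')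
        have h := mul_le_mul_of_nonneg_left hm (sq_nonneg (Real.sin θstar))
        linarith only [h]
      exact contra d' θstar h1 h2 hθs1 hθs2 h5.le le_rfl hdb'pos hdblt hθble
    · -- dstar = L cos θstar : jump to (dhi, arccos (dhi / L))
      set θ' := Real.arccos (dhi / L) with hθ'def
      have hdl1 : 0 ≤ dhi / L := by positivity
      have hdl2 : dhi / L ≤ 1 := by rw [div_le_one hL]; exact hdhiL.le
      have hcosθ' : Real.cos θ' = dhi / L := Real.cos_arccos (by linarith) hdl2
      have hθ'2 : θ' ≤ Real.pi / 2 := Real.arccos_le_pi_div_two.mpr hdl1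
      have hθ'0 : 0 ≤ θ' := Real.arccos_nonneg _
      have hθ'lo : θlo ≤ θ' := by
        have hx : dhi / L ≤ Real.cos θlo := by rw [div_le_iff₀ hL]; linarith only [hscen]
        have h2 : Real.arccos (Real.cos θlo) = θlo :=
          Real.arccos_cos (by linarith) (by linarith)
        calc θlo = Real.arccos (Real.cos θlo) := h2.symm
          _ ≤ θ' := arccos_anti hx
      have hcosθs : Real.cos θstar = dstar / L := by
        rw [eq_div_iff hL.ne', heq]; ring
      have hθ'lt : θ' < θstar := by
        by_contra hcc
        push_neg at hcc
        have h := Real.cos_le_cos_of_nonneg_of_le_pi (by linarith) (by linarith) hcc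
        rw [hcosθ', hcosθs, div_le_div_iff₀ hL hL] at h
        have h2 := mul_lt_mul_of_pos_right hlt hL
        linarith only [h, h2]
      have hQseq : L ^ 2 + dstar ^ 2 - 2 * dstar * L * Real.cos θstar =
          L ^ 2 - dstar ^ 2 := by
        rw [hcosθs]; field_simp; ring
      have hQ'eq : L ^ 2 + dhi ^ 2 - 2 * dhi * L * Real.cos θ' = L ^ 2 - dhi ^ 2 := by
        rw [hcosθ']; field_simp; ring
      have hQ'pos : (0:ℝ) < L ^ 2 - dhi ^ 2 := by
        have hh := mul_pos (sub_pos.2 hdhiL) (show (0:ℝ) < L + dhi by positivity)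
        linarith only [hh]
      have hQspos' : (0:ℝ) < L ^ 2 - dstar ^ 2 := by
        have hh := mul_pos (sub_pos.2 hdsL) (show (0:ℝ) < L + dstar by positivity)
        linarith only [hh]
      have hdb'eq : db L dhi θ' = Real.sqrt (L ^ 2 - dhi ^ 2) := by rw [db_eq, hQ'eq]
      have hdb'pos : 0 < db L dhi θ' := by rw [hdb'eq]; exact Real.sqrt_pos.mpr hQ'pos
      have hdblt : db L dhi θ' < db L dstar θstar := by
        rw [hdb'eq, db_eq, hQseq]
        refine Real.sqrt_lt_sqrt hQ'pos.le ?_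
        have h := mul_lt_mul_of_pos_left hlt (hds0.trans hlt)
        have h2 := mul_lt_mul_of_pos_right hlt hds0
        have h3 : dstar ^ 2 < dhi ^ 2 := by
          rw [pow_two, pow_two]; calc dstar * dstar < dstar * dhi := mul_lt_mul_of_pos_left hlt hds0
            _ < dhi * dhi := mul_lt_mul_of_pos_right hlt hdhi0
        linarith only [h3]
      have hθble : θb L dstar θstar ≤ θb L dhi θ' := by
        rw [θb_eq, θb_eq]
        apply Real.monotone_arcsin
        rw [hdb'eq, db_eq, hQseq]
        apply div_sqrt_le (by positivity)
          (mul_nonneg hdhi0.le (Real.sin_nonneg_of_nonneg_of_le_pi hθ'0 (by linarith)))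
          hQspos' hQ'pos
        have hs' : Real.sin θ' ^ 2 * L ^ 2 = L ^ 2 - dhi ^ 2 :=
          arccos_sin_sq hL hdhi0.le hdhiL
        have hk := key_ineq L dstar θstar
        rw [hQseq] at hk
        have hdsq : dstar ^ 2 ≤ dhi ^ 2 := by
          have h := mul_le_mul hds2 hds2 hds0.le hdhi0.le
          rw [pow_two, pow_two]; exact h
        have hmul : dstar ^ 2 * (L ^ 2 - dhi ^ 2) * (L ^ 2 * Real.sin θstar ^ 2) ≤
            dstar ^ 2 * (L ^ 2 - dhi ^ 2) * (L ^ 2 - dstar ^ 2) :=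
          mul_le_mul_of_nonneg_left hk (mul_nonneg (sq_nonneg dstar) hQ'pos.le)
        have hmul2 : dstar ^ 2 * ((L ^ 2 - dhi ^ 2) * (L ^ 2 - dstar ^ 2)) ≤
            dhi ^ 2 * ((L ^ 2 - dhi ^ 2) * (L ^ 2 - dstar ^ 2)) :=
          mul_le_mul_of_nonneg_right hdsq (mul_nonneg hQ'pos.le hQspos'.le)
        have hs2 : (dhi * Real.sin θ') ^ 2 * (L ^ 2 - dstar ^ 2) * L ^ 2 =
            dhi ^ 2 * ((L ^ 2 - dhi ^ 2) * (L ^ 2 - dstar ^ 2)) := by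
          linear_combination (dhi ^ 2 * (L ^ 2 - dstar ^ 2)) * hs'
        have hG : (dstar * Real.sin θstar) ^ 2 * (L ^ 2 - dhi ^ 2) * L ^ 2 ≤
            (dhi * Real.sin θ') ^ 2 * (L ^ 2 - dstar ^ 2) * L ^ 2 := by
          rw [hs2]; linarith only [hmul, hmul2]
        exact le_of_mul_le_mul_right hG hL2
      exact contra dhi θ' hd.le le_rfl hθ'lo hθ'2 hds2 hθ'lt.le hdb'pos hdblt hθble
  -- Step 3 : conclusion
  refine ⟨hstep2, hθs1, ?_⟩
  have h1 : dhi / L ≤ Real.cos θstar := by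
    rw [div_le_iff₀ hL]
    rw [hstep2] at hstep1
    linarith only [hstep1]
  have h2 : Real.arccos (Real.cos θstar) = θstar :=
    Real.arccos_cos (by linarith) (by linarith)
  calc θstar = Real.arccos (Real.cos θstar) := h2.symm
    _ ≤ Real.arccos (dhi / L) := arccos_anti h1
end
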